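/- Let p ∈ (0,1), let w₀ ∈ ℂ with w₀ ≠ 0, let f ∈ Σ*(p,w₀) with associated function P holomorphic on 𝔻, let ω be the Schwarz function with P = (1 + ω)/(1 − ω), and set c₁ = ω'(0). Then |a₂(f) − 1/p − p (c₁² + p² − 2 c₁ p)/(1 + p² − 2 c₁ p)| ≤ p (1 − |c₁|²)/|1 + p² − 2 c₁ p|. -/

import Mathlib

open Complex Metric Set Filter Topology

private lemma analyticAt_deriv' {f : ℂ → ℂ} {x : ℂ} (h : AnalyticAt ℂ f x) :
    AnalyticAt ℂ (deriv f) x := by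
  obtain ⟨s, hs, hf⟩ := h.exists_mem_nhds_analyticOnNhd
  exact hf.deriv x (mem_of_mem_nhds hs)

private lemma lsub {u v : ℂ → ℂ} {z : ℂ} (hu : AnalyticAt ℂ u z) (hv : AnalyticAt ℂ v z) :
    AnalyticAt ℂ (fun w => u w - v w) z := hu.sub hv

private lemma ladd {u v : ℂ → ℂ} {z : ℂ} (hu : AnalyticAt ℂ u z) (hv : AnalyticAt ℂ v z) :
    AnalyticAt ℂ (fun w => u w + v w) z := hu.add hv

private lemma deriv2_mul {u v : ℂ → ℂ} {z : ℂ} (hu : AnalyticAt ℂ u z) (hv : AnalyticAt ℂ v z) :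
    deriv (deriv (fun w => u w * v w)) z =
      deriv (deriv u) z * v z + 2 * deriv u z * deriv v z + u z * deriv (deriv v) z := by
  have hu' : AnalyticAt ℂ (deriv u) z := analyticAt_deriv' hu
  have hv' : AnalyticAt ℂ (deriv v) z := analyticAt_deriv' hv
  have h1 : deriv (fun w => u w * v w) =ᶠ[𝓝 z]
      fun w => deriv u w * v w + u w * deriv v w := by
    filter_upwards [hu.eventually_analyticAt, hv.eventually_analyticAt] with w hw1 hw2
    exact deriv_fun_mul hw1.differentiableAt hw2.differentiableAt
  rw [h1.deriv_eq, deriv_fun_add (hu'.differentiableAt.fun_mul hv.differentiableAt)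
      (hu.differentiableAt.fun_mul hv'.differentiableAt),
    deriv_fun_mul hu'.differentiableAt hv.differentiableAt,
    deriv_fun_mul hu.differentiableAt hv'.differentiableAt]
  ring

private lemma deriv2_add {u v : ℂ → ℂ} {z : ℂ} (hu : AnalyticAt ℂ u z) (hv : AnalyticAt ℂ v z) :
    deriv (deriv (fun w => u w + v w)) z = deriv (deriv u) z + deriv (deriv v) z := by
  have h1 : deriv (fun w => u w + v w) =ᶠ[𝓝 z] fun w => deriv u w + deriv v w := by
    filter_upwards [hu.eventually_analyticAt, hv.eventually_analyticAt] with w hw1 hw2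
    exact deriv_fun_add hw1.differentiableAt hw2.differentiableAt
  rw [h1.deriv_eq, deriv_fun_add (analyticAt_deriv' hu).differentiableAt
      (analyticAt_deriv' hv).differentiableAt]

private lemma deriv2_sub {u v : ℂ → ℂ} {z : ℂ} (hu : AnalyticAt ℂ u z) (hv : AnalyticAt ℂ v z) :
    deriv (deriv (fun w => u w - v w)) z = deriv (deriv u) z - deriv (deriv v) z := by
  have h1 : deriv (fun w => u w - v w) =ᶠ[𝓝 z] fun w => deriv u w - deriv v w := by
    filter_upwards [hu.eventually_analyticAt, hv.eventually_analyticAt] with w hw1 hw2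
    exact deriv_fun_sub hw1.differentiableAt hw2.differentiableAt
  rw [h1.deriv_eq, deriv_fun_sub (analyticAt_deriv' hu).differentiableAt
      (analyticAt_deriv' hv).differentiableAt]

/-- Schwarz–Pick at 0: a holomorphic function on the disc bounded by 1 satisfies
`|φ'(0)| ≤ 1 - |φ 0|²`. -/
private lemma schwarz_pick_zero {φ : ℂ → ℂ} (hd : DifferentiableOn ℂ φ (ball 0 1))
    (hb : ∀ z ∈ ball (0 : ℂ) 1, ‖φ z‖ ≤ 1) :
    ‖deriv φ 0‖ ≤ 1 - ‖φ 0‖ ^ 2 := by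
  have h0 : (0 : ℂ) ∈ ball (0 : ℂ) 1 := mem_ball_self one_pos
  by_cases hmax : ∃ z₀ ∈ ball (0 : ℂ) 1, 1 ≤ ‖φ z₀‖
  · obtain ⟨z₀, hz₀, hz₀1⟩ := hmax
    have hmaxon : IsMaxOn (norm ∘ φ) (ball (0 : ℂ) 1) z₀ := fun z hz => by
      simp only [Function.comp_apply]
      exact (hb z hz).trans hz₀1
    have hconst := Complex.eqOn_of_isPreconnected_of_isMaxOn_norm
      (convex_ball (0 : ℂ) 1).isPreconnected isOpen_ball hd hz₀ hmaxon
    have hev : φ =ᶠ[𝓝 0] fun _ => φ z₀ := by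
      filter_upwards [isOpen_ball.mem_nhds h0] with z hz using hconst hz
    have hder : deriv φ 0 = 0 := by rw [hev.deriv_eq]; simp
    have h01 : ‖φ 0‖ ≤ 1 := hb 0 h0
    rw [hder]
    simp only [norm_zero]
    nlinarith [norm_nonneg (φ 0)]
  · push_neg at hmax
    set a := φ 0 with ha
    have haa : ‖a‖ < 1 := hmax 0 h0
    have hden : ∀ z ∈ ball (0 : ℂ) 1, 1 - (starRingEnd ℂ) a * φ z ≠ 0 := by
      intro z hz h
      have : ‖(starRingEnd ℂ) a * φ z‖ = 1 := by
        have : ((starRingEnd ℂ) a * φ z) = 1 := by linear_combination -h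
        rw [this]; simp
      rw [norm_mul, Complex.norm_conj] at this
      nlinarith [hmax z hz, norm_nonneg (φ z), norm_nonneg a]
    set h : ℂ → ℂ := fun z => (φ z - a) / (1 - (starRingEnd ℂ) a * φ z) with hh
    have hhd : DifferentiableOn ℂ h (ball 0 1) :=
      (hd.sub_const a).div ((differentiableOn_const _).sub
        ((differentiableOn_const _).mul hd)) hden
    have key : ∀ z ∈ ball (0 : ℂ) 1, ‖h z‖ < 1 := by
      intro z hz
      have h1 : ‖φ z‖ < 1 := hmax z hz
      have h2 : normSq (1 - (starRingEnd ℂ) a * φ z) - normSq (φ z - a)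
          = (1 - normSq a) * (1 - normSq (φ z)) := by
        simp only [Complex.normSq_apply, Complex.sub_re, Complex.sub_im, Complex.mul_re,
          Complex.mul_im, Complex.one_re, Complex.one_im, Complex.conj_re, Complex.conj_im]
        ring
      have hna : normSq a < 1 := by
        rw [← Complex.sq_norm]; nlinarith [norm_nonneg a]
      have hnz : normSq (φ z) < 1 := by
        rw [← Complex.sq_norm]; nlinarith [norm_nonneg (φ z)]
      have h3 : normSq (φ z - a) < normSq (1 - (starRingEnd ℂ) a * φ z) := by nlinarith
      have h4 : ‖φ z - a‖ < ‖1 - (starRingEnd ℂ) a * φ z‖ := by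
        rw [Complex.norm_def, Complex.norm_def]
        exact Real.sqrt_lt_sqrt (normSq_nonneg _) h3
      rw [hh]
      simp only [norm_div]
      rw [div_lt_one (lt_of_le_of_lt (norm_nonneg _) h4)]
      exact h4
    have hh0 : h 0 = 0 := by rw [hh]; simp [← ha]
    have hmaps : MapsTo h (ball (0 : ℂ) 1) (ball (h 0) 1) := by
      intro z hz
      rw [hh0, mem_ball_zero_iff]
      exact key z hz
    have hbnd : ‖deriv h 0‖ ≤ 1 := by
      have := Complex.norm_deriv_le_div_of_mapsTo_ball hhd (hmaps.mono_right ball_subset_closedBall) one_pos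
      simpa using this
    -- compute deriv h 0
    have hφd : DifferentiableAt ℂ φ 0 := hd.differentiableAt (isOpen_ball.mem_nhds h0)
    have hden0 : (1 : ℂ) - (starRingEnd ℂ) a * φ 0 ≠ 0 := hden 0 h0
    have hderh : deriv h 0 = deriv φ 0 / (1 - (starRingEnd ℂ) a * a) := by
      rw [hh, deriv_fun_div (hφd.sub_const a)
        ((differentiableAt_const _).fun_sub ((differentiableAt_const _).fun_mul hφd)) hden0]
      rw [deriv_sub_const, deriv_const_sub, deriv_const_mul _ hφd]
      rw [← ha]
      rw [div_eq_div_iff (pow_ne_zero 2 (show (1:ℂ) - (starRingEnd ℂ) a * a ≠ 0 from hden0))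
        (show (1:ℂ) - (starRingEnd ℂ) a * a ≠ 0 from hden0)]
      ring
    have hcan : (1 : ℂ) - (starRingEnd ℂ) a * a = ((1 - ‖a‖ ^ 2 : ℝ) : ℂ) := by
      rw [← Complex.normSq_eq_conj_mul_self, ← Complex.sq_norm]
      push_cast
      ring
    rw [hderh, norm_div, hcan, Complex.norm_real, Real.norm_eq_abs,
      _root_.abs_of_nonneg (by nlinarith [norm_nonneg a] : (0:ℝ) ≤ 1 - ‖a‖ ^ 2)] at hbnd
    rw [div_le_one (by nlinarith [norm_nonneg a])] at hbnd
    simpa [← ha] using hbnd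

/-- The second Taylor coefficient `a₂(f) = f''(0)/2`. -/
noncomputable def a2 (f : ℂ → ℂ) : ℂ := iteratedDeriv 2 f 0 / 2

/-- `f` belongs to the class `Σ*(p, w₀)` with associated holomorphic function `P`:
`f` is holomorphic on the unit disc except for a simple pole at `p`, `f 0 = 0`,
`f' 0 = 1`, `f` omits `w₀`, and
`P z = -z f'(z)/(f z - w₀) - p/(z - p) + p z/(1 - p z)` extends holomorphically
to the unit disc with `P 0 = 1` and `Re (P z) > 0` there. -/
def SigmaStarWith (p : ℝ) (w₀ : ℂ) (f P : ℂ → ℂ) : Prop :=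
  (∃ g : ℂ → ℂ, DifferentiableOn ℂ g (ball (0 : ℂ) 1) ∧ g p ≠ 0 ∧
      ∀ z ∈ ball (0 : ℂ) 1, z ≠ (p : ℂ) → f z = g z / (z - p)) ∧
  f 0 = 0 ∧ deriv f 0 = 1 ∧
  (∀ z ∈ ball (0 : ℂ) 1, z ≠ (p : ℂ) → f z ≠ w₀) ∧
  DifferentiableOn ℂ P (ball (0 : ℂ) 1) ∧ P 0 = 1 ∧
  (∀ z ∈ ball (0 : ℂ) 1, 0 < (P z).re) ∧
  (∀ z ∈ ball (0 : ℂ) 1, z ≠ (p : ℂ) →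
    P z = -z * deriv f z / (f z - w₀) - p / (z - p) + p * z / (1 - p * z))

/-- `f` belongs to the class `Σ*(p, w₀)`. -/
def SigmaStar (p : ℝ) (w₀ : ℂ) (f : ℂ → ℂ) : Prop :=
  ∃ P : ℂ → ℂ, SigmaStarWith p w₀ f P

/-- `ω` is the Schwarz function associated to `P`, i.e. a holomorphic self-map of
the unit disc fixing `0` with `P = (1 + ω)/(1 - ω)`. -/
def SchwarzOf (P ω : ℂ → ℂ) : Prop :=
  DifferentiableOn ℂ ω (ball (0 : ℂ) 1) ∧
  MapsTo ω (ball (0 : ℂ) 1) (ball (0 : ℂ) 1) ∧ ω 0 = 0 ∧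
  ∀ z ∈ ball (0 : ℂ) 1, P z = (1 + ω z) / (1 - ω z)

theorem stmt_10 (p : ℝ) (hp : 0 < p ∧ p < 1) (w₀ : ℂ) (hw : w₀ ≠ 0)
    (f P ω : ℂ → ℂ) (hf : SigmaStarWith p w₀ f P) (hω : SchwarzOf P ω) :
    ‖a2 f - 1 / p - (p : ℂ) *
        ((deriv ω 0) ^ 2 + (p : ℂ) ^ 2 - 2 * deriv ω 0 * p) /
          (1 + (p : ℂ) ^ 2 - 2 * deriv ω 0 * p)‖ ≤
      p * (1 - ‖deriv ω 0‖ ^ 2) /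
        ‖1 + (p : ℂ) ^ 2 - 2 * deriv ω 0 * p‖ := by
  obtain ⟨hp0, hp1⟩ := hp
  obtain ⟨⟨g, hg, hgp, hfg⟩, hf0, hf'0, hfw, hPd, hP0, hPre, hPeq⟩ := hf
  obtain ⟨hωd, hωm, hω0, hPω⟩ := hω
  have h01 : (0 : ℂ) ∈ ball (0 : ℂ) 1 := mem_ball_self one_pos
  have h0U : (0 : ℂ) ∈ ball (0 : ℂ) p := mem_ball_self hp0
  have hUsub : ball (0 : ℂ) p ⊆ ball (0 : ℂ) 1 := ball_subset_ball hp1.le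
  have hUz : ∀ z ∈ ball (0 : ℂ) p, z ≠ (p : ℂ) := by
    intro z hz h
    rw [mem_ball_zero_iff, h] at hz
    simp [Complex.norm_real, abs_of_pos hp0] at hz
  -- `f` is differentiable near 0
  have hfd : DifferentiableOn ℂ f (ball (0 : ℂ) p) := by
    have h1 : DifferentiableOn ℂ (fun z => g z / (z - (p : ℂ))) (ball (0 : ℂ) p) :=
      (hg.mono hUsub).div (differentiableOn_id.sub (differentiableOn_const _))
        (fun z hz => sub_ne_zero.mpr (hUz z hz))
    exact h1.congr (fun z hz => hfg z (hUsub hz) (hUz z hz))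
  have hfa : AnalyticAt ℂ f 0 := hfd.analyticAt (isOpen_ball.mem_nhds h0U)
  have hf'a : AnalyticAt ℂ (deriv f) 0 := analyticAt_deriv' hfa
  have hPa : AnalyticAt ℂ P 0 := hPd.analyticAt (isOpen_ball.mem_nhds h01)
  -- dslope function G
  set G : ℂ → ℂ := dslope ω 0 with hGdef
  have hGd : DifferentiableOn ℂ G (ball (0 : ℂ) 1) :=
    (Complex.differentiableOn_dslope (isOpen_ball.mem_nhds h01)).mpr hωd
  have hGa : AnalyticAt ℂ G 0 := hGd.analyticAt (isOpen_ball.mem_nhds h01)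
  set c₁ := deriv ω 0 with hc₁def
  have hG0 : G 0 = c₁ := dslope_same ω 0
  set c₂ := deriv G 0 with hc₂def
  have hωG : ∀ z : ℂ, ω z = z * G z := by
    intro z
    rcases eq_or_ne z 0 with rfl | hz
    · simp [hω0]
    · rw [hGdef, dslope_of_ne _ hz, slope_def_field, hω0]
      field_simp
      ring
  -- Schwarz bound
  have hub : ∀ z ∈ ball (0 : ℂ) 1, ‖G z‖ ≤ 1 := by
    intro z hz
    have := Complex.norm_dslope_le_div_of_mapsTo_ball hωd (by rw [hω0]; exact hωm.mono_right ball_subset_closedBall) hz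
    simpa using this
  have hc2 : ‖c₂‖ ≤ 1 - ‖c₁‖ ^ 2 := by
    have := schwarz_pick_zero hGd hub
    rwa [hGdef, dslope_same, ← hc₁def, ← hGdef, ← hc₂def] at this
  have hida : AnalyticAt ℂ (fun w : ℂ => w) (0 : ℂ) := analyticAt_id
  have hidd : DifferentiableAt ℂ (fun w : ℂ => w) (0 : ℂ) := differentiableAt_id
  have hid2 : deriv (deriv (fun w : ℂ => w)) 0 = 0 := by
    have : deriv (fun w : ℂ => w) = fun _ => (1 : ℂ) := funext fun x => deriv_id x
    rw [this]; simp
  -- data on H z = z * G z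
  have hHa : AnalyticAt ℂ (fun z : ℂ => z * G z) 0 := hida.mul hGa
  have hHd : DifferentiableAt ℂ (fun z : ℂ => z * G z) 0 := hHa.differentiableAt
  have hH1 : deriv (fun z : ℂ => z * G z) 0 = c₁ := by
    rw [deriv_fun_mul hidd hGa.differentiableAt]
    simp [hG0]
  have hH2 : deriv (deriv (fun z : ℂ => z * G z)) 0 = 2 * c₂ := by
    rw [deriv2_mul hida hGa, hid2]
    simp [← hc₂def]
  -- E identity: P z * (1 - z * G z) - (1 + z * G z) = 0 on the unit ball
  have hE0 : ∀ z ∈ ball (0 : ℂ) 1, P z * (1 - z * G z) - (1 + z * G z) = 0 := by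
    intro z hz
    have hωz : ‖ω z‖ < 1 := mem_ball_zero_iff.mp (hωm hz)
    have hne : (1 : ℂ) - ω z ≠ 0 := by
      intro h
      have : ω z = 1 := by linear_combination -h
      rw [this] at hωz; simp at hωz
    have h := hPω z hz
    rw [← hωG z]
    rw [h]
    field_simp
    ring
  have hEev : (fun z : ℂ => P z * (1 - z * G z) - (1 + z * G z)) =ᶠ[𝓝 0] fun _ => 0 := by
    filter_upwards [isOpen_ball.mem_nhds h01] with z hz using hE0 z hz
  have hE1 : deriv (fun z : ℂ => P z * (1 - z * G z) - (1 + z * G z)) 0 = 0 := by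
    rw [hEev.deriv_eq]; simp
  have hE2 : deriv (deriv (fun z : ℂ => P z * (1 - z * G z) - (1 + z * G z))) 0 = 0 := by
    rw [hEev.deriv.deriv_eq]; simp
  -- expand hE1
  have hP1 : deriv P 0 = 2 * c₁ := by
    rw [deriv_fun_sub (hPa.differentiableAt.fun_mul ((differentiableAt_const _).fun_sub hHd))
        ((differentiableAt_const _).fun_add hHd),
      deriv_fun_mul hPa.differentiableAt ((differentiableAt_const _).fun_sub hHd),
      deriv_const_sub, deriv_const_add, hH1, hP0] at hE1
    simp at hE1
    linear_combination hE1
  -- expand hE2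
  have haux1 : deriv (fun z : ℂ => 1 - z * G z) 0 = -c₁ := by
    rw [deriv_const_sub, hH1]
  have haux2 : deriv (deriv (fun z : ℂ => 1 - z * G z)) 0 = -(2 * c₂) := by
    have hfun : deriv (fun z : ℂ => 1 - z * G z) = fun x => -deriv (fun z : ℂ => z * G z) x :=
      funext fun x => by rw [deriv_const_sub]
    rw [hfun, deriv.fun_neg, hH2]
  have haux3 : deriv (deriv (fun z : ℂ => 1 + z * G z)) 0 = 2 * c₂ := by
    have hfun : deriv (fun z : ℂ => 1 + z * G z) = fun x => deriv (fun z : ℂ => z * G z) x :=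
      funext fun x => by rw [deriv_const_add]
    rw [hfun]
    simpa using hH2
  have hP2 : deriv (deriv P) 0 = 4 * c₂ + 4 * c₁ ^ 2 := by
    have hca : AnalyticAt ℂ (fun z : ℂ => 1 - z * G z) 0 := lsub analyticAt_const hHa
    have hcb : AnalyticAt ℂ (fun z : ℂ => 1 + z * G z) 0 := ladd analyticAt_const hHa
    rw [deriv2_sub (hPa.fun_mul hca) hcb,
      deriv2_mul hPa hca, haux3, haux1, haux2, hP0, hP1] at hE2
    simp at hE2
    linear_combination hE2
  -- linear polynomial atoms
  have hl1f : deriv (fun w : ℂ => w - (p:ℂ)) = fun _ => 1 := funext fun x => by simp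
  have hl2f : deriv (fun w : ℂ => 1 - (p:ℂ) * w) = fun _ => -(p:ℂ) := funext fun x => by
    simpa using (((hasDerivAt_id x).const_mul (p:ℂ)).const_sub 1).deriv
  have hl3f : deriv (fun w : ℂ => (p:ℂ) * w) = fun _ => (p:ℂ) := funext fun x => by
    simpa using ((hasDerivAt_id x).const_mul (p:ℂ)).deriv
  have hSl : AnalyticAt ℂ (fun w : ℂ => w - (p:ℂ)) 0 := lsub hida analyticAt_const
  have hSr : AnalyticAt ℂ (fun w : ℂ => 1 - (p:ℂ) * w) 0 :=
    lsub analyticAt_const (analyticAt_const.mul hida)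
  have hSa : AnalyticAt ℂ (fun z : ℂ => (z - (p:ℂ)) * (1 - (p:ℂ) * z)) 0 := hSl.mul hSr
  have hQ1a : AnalyticAt ℂ (fun z : ℂ => (p:ℂ) * (1 - (p:ℂ) * z)) 0 := analyticAt_const.mul hSr
  have hQ2a : AnalyticAt ℂ (fun z : ℂ => (p:ℂ) * z * (z - (p:ℂ))) 0 :=
    (analyticAt_const.mul hida).mul hSl
  have hBa : AnalyticAt ℂ (fun z : ℂ => f z - w₀) 0 := lsub hfa analyticAt_const
  have hMa : AnalyticAt ℂ (fun z : ℂ => z * deriv f z) 0 := hida.mul hf'a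
  have hAa : AnalyticAt ℂ (fun z : ℂ =>
      P z * ((z - (p:ℂ)) * (1 - (p:ℂ) * z)) + (p:ℂ) * (1 - (p:ℂ) * z)
        - (p:ℂ) * z * (z - (p:ℂ))) 0 := lsub (ladd (hPa.mul hSa) hQ1a) hQ2a
  -- derivative data for atoms
  have hS1 : deriv (fun z : ℂ => (z - (p:ℂ)) * (1 - (p:ℂ) * z)) 0 = 1 + (p:ℂ)^2 := by
    rw [deriv_fun_mul hSl.differentiableAt hSr.differentiableAt, hl1f, hl2f]
    ring
  have hS2 : deriv (deriv (fun z : ℂ => (z - (p:ℂ)) * (1 - (p:ℂ) * z))) 0 = -(2*(p:ℂ)) := by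
    rw [deriv2_mul hSl hSr, hl1f, hl2f]
    simp
  have hQ1f : deriv (fun z : ℂ => (p:ℂ) * (1 - (p:ℂ) * z)) = fun _ => -(p:ℂ)^2 :=
    funext fun x => by rw [deriv_const_mul_field, hl2f]; ring
  have hQ11 : deriv (fun z : ℂ => (p:ℂ) * (1 - (p:ℂ) * z)) 0 = -(p:ℂ)^2 := by rw [hQ1f]
  have hQ12 : deriv (deriv (fun z : ℂ => (p:ℂ) * (1 - (p:ℂ) * z))) 0 = 0 := by
    rw [hQ1f]; simp
  have hQ21 : deriv (fun z : ℂ => (p:ℂ) * z * (z - (p:ℂ))) 0 = -(p:ℂ)^2 := by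
    rw [deriv_fun_mul (analyticAt_const.fun_mul hida).differentiableAt hSl.differentiableAt, hl3f, hl1f]
    ring
  have hQ22 : deriv (deriv (fun z : ℂ => (p:ℂ) * z * (z - (p:ℂ)))) 0 = 2*(p:ℂ) := by
    rw [deriv2_mul (analyticAt_const.fun_mul hida) hSl, hl3f, hl1f]
    simp
  have hBf : deriv (fun z : ℂ => f z - w₀) = deriv f := funext fun x => by rw [deriv_sub_const]
  have hB1 : deriv (fun z : ℂ => f z - w₀) 0 = 1 := by rw [hBf, hf'0]
  have hB2 : deriv (deriv (fun z : ℂ => f z - w₀)) 0 = deriv (deriv f) 0 := by rw [hBf]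
  have hM1 : deriv (fun z : ℂ => z * deriv f z) 0 = 1 := by
    rw [deriv_fun_mul hidd hf'a.differentiableAt]
    simp [hf'0]
  have hM2 : deriv (deriv (fun z : ℂ => z * deriv f z)) 0 = 2 * deriv (deriv f) 0 := by
    rw [deriv2_mul hida hf'a, hid2]
    simp
  -- A data
  have dPS : DifferentiableAt ℂ (fun z : ℂ => P z * ((z - (p:ℂ)) * (1 - (p:ℂ) * z))) 0 :=
    hPa.differentiableAt.mul hSa.differentiableAt
  have dPSQ : DifferentiableAt ℂ (fun z : ℂ =>
      P z * ((z - (p:ℂ)) * (1 - (p:ℂ) * z)) + (p:ℂ) * (1 - (p:ℂ) * z)) 0 :=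
    dPS.add hQ1a.differentiableAt
  have hA1 : deriv (fun z : ℂ =>
      P z * ((z - (p:ℂ)) * (1 - (p:ℂ) * z)) + (p:ℂ) * (1 - (p:ℂ) * z)
        - (p:ℂ) * z * (z - (p:ℂ))) 0 = 1 + (p:ℂ)^2 - 2*c₁*(p:ℂ) := by
    rw [deriv_fun_sub dPSQ hQ2a.differentiableAt, deriv_fun_add dPS hQ1a.differentiableAt,
      deriv_fun_mul hPa.differentiableAt hSa.differentiableAt, hP1, hS1, hQ11, hQ21]
    simp [hP0]; ring
  have hA2 : deriv (deriv (fun z : ℂ =>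
      P z * ((z - (p:ℂ)) * (1 - (p:ℂ) * z)) + (p:ℂ) * (1 - (p:ℂ) * z)
        - (p:ℂ) * z * (z - (p:ℂ)))) 0
      = -(p:ℂ)*(4*c₂ + 4*c₁^2) + 4*c₁*(1+(p:ℂ)^2) - 4*(p:ℂ) := by
    rw [deriv2_sub (ladd (hPa.fun_mul hSa) hQ1a) hQ2a, deriv2_add (hPa.fun_mul hSa) hQ1a,
      deriv2_mul hPa hSa, hP1, hP2, hS1, hS2, hQ12, hQ22]
    simp [hP0]; ring
  -- the fundamental identity F = 0 near 0
  have hF0 : ∀ z ∈ ball (0 : ℂ) p,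
      (P z * ((z - (p:ℂ)) * (1 - (p:ℂ) * z)) + (p:ℂ) * (1 - (p:ℂ) * z)
        - (p:ℂ) * z * (z - (p:ℂ))) * (f z - w₀)
        + z * deriv f z * ((z - (p:ℂ)) * (1 - (p:ℂ) * z)) = 0 := by
    intro z hz
    have hz1 : z ∈ ball (0 : ℂ) 1 := hUsub hz
    have hzp : z ≠ (p : ℂ) := hUz z hz
    have hB : f z - w₀ ≠ 0 := sub_ne_zero.mpr (hfw z hz1 hzp)
    have hzp' : z - (p : ℂ) ≠ 0 := sub_ne_zero.mpr hzp
    have hpz : (1 : ℂ) - (p:ℂ) * z ≠ 0 := by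
      intro h
      have h2 : (p:ℂ) * z = 1 := by linear_combination -h
      have h3 : ‖(p:ℂ) * z‖ = 1 := by rw [h2]; simp
      rw [norm_mul, Complex.norm_real, Real.norm_eq_abs, abs_of_pos hp0] at h3
      have h4 : ‖z‖ < 1 := mem_ball_zero_iff.mp hz1
      nlinarith [norm_nonneg z]
    have h := hPeq z hz1 hzp
    rw [h]
    simp only [div_eq_mul_inv]
    linear_combination (-z * deriv f z * ((z - p) * (1 - p * z))) * mul_inv_cancel₀ hB
      + (-p * (1 - p * z) * (f z - w₀)) * mul_inv_cancel₀ hzp'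
      + (p * z * (z - p) * (f z - w₀)) * mul_inv_cancel₀ hpz
  have hFev : (fun z : ℂ =>
      (P z * ((z - (p:ℂ)) * (1 - (p:ℂ) * z)) + (p:ℂ) * (1 - (p:ℂ) * z)
        - (p:ℂ) * z * (z - (p:ℂ))) * (f z - w₀)
        + z * deriv f z * ((z - (p:ℂ)) * (1 - (p:ℂ) * z))) =ᶠ[𝓝 0] fun _ => 0 := by
    filter_upwards [isOpen_ball.mem_nhds h0U] with z hz using hF0 z hz
  have hF1 : deriv (fun z : ℂ =>
      (P z * ((z - (p:ℂ)) * (1 - (p:ℂ) * z)) + (p:ℂ) * (1 - (p:ℂ) * z)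
        - (p:ℂ) * z * (z - (p:ℂ))) * (f z - w₀)
        + z * deriv f z * ((z - (p:ℂ)) * (1 - (p:ℂ) * z))) 0 = 0 := by
    rw [hFev.deriv_eq]; simp
  have hF2 : deriv (deriv (fun z : ℂ =>
      (P z * ((z - (p:ℂ)) * (1 - (p:ℂ) * z)) + (p:ℂ) * (1 - (p:ℂ) * z)
        - (p:ℂ) * z * (z - (p:ℂ))) * (f z - w₀)
        + z * deriv f z * ((z - (p:ℂ)) * (1 - (p:ℂ) * z)))) 0 = 0 := by
    rw [hFev.deriv.deriv_eq]; simp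
  -- first-order equation: w₀ * D = -p
  have e₁ : w₀ * (1 + (p:ℂ)^2 - 2*c₁*(p:ℂ)) = -(p:ℂ) := by
    rw [deriv_fun_add (hAa.differentiableAt.fun_mul hBa.differentiableAt)
        (hMa.differentiableAt.fun_mul hSa.differentiableAt),
      deriv_fun_mul hAa.differentiableAt hBa.differentiableAt,
      deriv_fun_mul hMa.differentiableAt hSa.differentiableAt,
      hA1, hB1, hM1, hS1] at hF1
    simp [hP0, hf0] at hF1
    linear_combination -hF1
  -- second-order equation
  have e₂ : (-(p:ℂ)*(4*c₂ + 4*c₁^2) + 4*c₁*(1+(p:ℂ)^2) - 4*(p:ℂ)) * (-w₀)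
      + 2 * (1 + (p:ℂ)^2 - 2*c₁*(p:ℂ))
      + (2 * deriv (deriv f) 0 * (-(p:ℂ)) + 2 * (1 + (p:ℂ)^2)) = 0 := by
    rw [deriv2_add (hAa.fun_mul hBa) (hMa.fun_mul hSa), deriv2_mul hAa hBa, deriv2_mul hMa hSa,
      hA1, hA2, hB1, hB2, hM1, hM2, hS1, hS2] at hF2
    simp [hP0, hf0] at hF2
    linear_combination hF2
  -- final algebra
  have hpc : (p:ℂ) ≠ 0 := ofReal_ne_zero.mpr hp0.ne'
  have hD : (1 + (p:ℂ)^2 - 2*c₁*(p:ℂ)) ≠ 0 := by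
    intro h
    rw [h, mul_zero] at e₁
    exact hpc (by linear_combination e₁)
  have ht2 : iteratedDeriv 2 f 0 = deriv (deriv f) 0 := by
    rw [iteratedDeriv_succ, iteratedDeriv_one]
  have key : a2 f - 1/(p:ℂ)
      - (p:ℂ) * (c₁^2 + (p:ℂ)^2 - 2*c₁*(p:ℂ)) / (1 + (p:ℂ)^2 - 2*c₁*(p:ℂ))
      = -((p:ℂ) * c₂) / (1 + (p:ℂ)^2 - 2*c₁*(p:ℂ)) := by
    rw [a2, ht2]
    rw [div_sub_div _ _ (two_ne_zero) hpc, div_sub_div _ _ (mul_ne_zero two_ne_zero hpc) hD,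
      div_eq_div_iff (mul_ne_zero (mul_ne_zero two_ne_zero hpc) hD) hD]
    linear_combination (-(1:ℂ)/2 * (1 + (p:ℂ)^2 - 2*c₁*(p:ℂ))^2) * e₂
      + (-(1:ℂ)/2 * (1 + (p:ℂ)^2 - 2*c₁*(p:ℂ))
          * (-(p:ℂ)*(4*c₂+4*c₁^2) + 4*c₁*(1+(p:ℂ)^2) - 4*(p:ℂ))) * e₁
  rw [key, norm_div, norm_neg, norm_mul, Complex.norm_real, Real.norm_eq_abs, abs_of_pos hp0]
  have hDpos : 0 < ‖1 + (p:ℂ)^2 - 2*c₁*(p:ℂ)‖ := norm_pos_iff.mpr hD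
  rw [div_le_div_iff_of_pos_right hDpos]
  exact mul_le_mul_of_nonneg_left hc2 hp0.le
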